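/- In the heavy-tail model, for a kernel Q' that is a probability density supported on [−1,1] with cdf Q, the smoothed conditional survival satisfies: E[Q((Y − y_n)/λ) | X = x'] = F̄(y_n|x') + ∫_{−1}^{1} Q'(u)(F̄(y_n + λu|x') − F̄(y_n|x')) du, and if λ/y_n → 0, sup_{x' ∈ B(x,h)} |∫_{−1}^{1} Q'(u)(F̄(y_n+λu|x')/F̄(y_n|x') − 1) du| = O(λ/y_n). -/

import Mathlib

open Filter Real Metric MeasureTheory

set_option maxHeartbeats 1000000 in
theorem stmt_17 {E : Type*} [PseudoMetricSpace E]
    {Ω : Type*} [MeasurableSpace Ω] (P : Measure Ω) [IsProbabilityMeasure P]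
    (c γ : E → ℝ) (ε : E → ℝ → ℝ) (Fbar : E → ℝ → ℝ)
    (hγpos : ∀ z, 0 < γ z) (hcpos : ∀ z, 0 < c z)
    (hεcont : ∀ z, Continuous (ε z))
    (hεlim : ∀ z, Tendsto (ε z) atTop (nhds 0))
    (hF : ∀ z, ∀ y ≥ (1:ℝ),
      Fbar z y = c z * Real.exp (-(∫ u in (1:ℝ)..y, (1/γ z - ε z u) / u)))
    (κγ κε u₀ : ℝ) (hκγ : 0 < κγ) (hκε : 0 < κε) (hu₀ : 1 < u₀)
    (hLε : ∀ z z' : E, ∀ u > u₀, |ε z u - ε z' u| ≤ κε * dist z z')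
    (hLγ : ∀ z z' : E, |1/γ z - 1/γ z'| ≤ κγ * dist z z')
    -- the kernel Q' is a pdf supported on [-1,1], with cdf Q
    (Q' : ℝ → ℝ) (hQ'nonneg : ∀ t, 0 ≤ Q' t)
    (hQ'supp : ∀ t, t ∉ Set.Icc (-1:ℝ) 1 → Q' t = 0)
    (hQ'meas : Measurable Q')
    (hQ'int : ∫ t, Q' t = 1)
    (Q : ℝ → ℝ) (hQ : ∀ t, Q t = ∫ s in Set.Iic t, Q' s)
    (x : E) (y h lam : ℕ → ℝ)
    (hy : Tendsto y atTop atTop) (hh : Tendsto h atTop (nhds 0))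
    (hlampos : ∀ n, 0 < lam n)
    (hlam : Tendsto (fun n => lam n / y n) atTop (nhds 0)) :
    (∀ n : ℕ, ∀ x' : E, ∀ W : Ω → ℝ, Measurable W →
      (∀ t : ℝ, (P {ω | t < W ω}).toReal = Fbar x' t) →
      ∫ ω, Q ((W ω - y n) / lam n) ∂P
        = Fbar x' (y n) +
          ∫ u in (-1:ℝ)..1, Q' u * (Fbar x' (y n + lam n * u) - Fbar x' (y n))) ∧
    (∃ C > (0:ℝ), ∀ᶠ n in atTop, ∀ x' ∈ closedBall x (h n),
      |∫ u in (-1:ℝ)..1, Q' u * (Fbar x' (y n + lam n * u) / Fbar x' (y n) - 1)|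
        ≤ C * (lam n / y n)) := by
  -- Q' is integrable
  have hQ'integrable : Integrable Q' := by
    by_contra hcon
    rw [MeasureTheory.integral_undef hcon] at hQ'int
    norm_num at hQ'int
  have hQ'ii : ∀ p q : ℝ, IntervalIntegrable Q' volume p q :=
    fun p q => hQ'integrable.intervalIntegrable
  have hQ'int11 : ∫ u in (-1:ℝ)..1, Q' u = 1 := by
    rw [intervalIntegral.integral_of_le (by norm_num : (-1:ℝ) ≤ 1),
        ← MeasureTheory.integral_Icc_eq_integral_Ioc,
        MeasureTheory.setIntegral_eq_integral_of_forall_compl_eq_zero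
          (fun t ht => hQ'supp t ht), hQ'int]
  constructor
  · -- Part 1
    intro n x' W hWmeas hWdist
    set a := y n with ha_def
    set l := lam n with hl_def
    have hl : 0 < l := hlampos n
    -- Fbar x' is antitone, bounded, measurable
    have hFb_nonneg : ∀ t, 0 ≤ Fbar x' t := fun t => (hWdist t) ▸ ENNReal.toReal_nonneg
    have hFb_le_one : ∀ t, Fbar x' t ≤ 1 := by
      intro t
      rw [← hWdist t]
      calc (P {ω | t < W ω}).toReal ≤ (1 : ENNReal).toReal :=
            ENNReal.toReal_mono ENNReal.one_ne_top prob_le_one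
        _ = 1 := ENNReal.toReal_one
    have hFb_anti : Antitone (Fbar x') := by
      intro s t hst
      rw [← hWdist s, ← hWdist t]
      exact ENNReal.toReal_mono (measure_ne_top P _)
        (measure_mono (fun ω hω => lt_of_le_of_lt hst hω))
    have hFb_meas : Measurable (Fbar x') := hFb_anti.measurable
    -- the two-variable function
    set f : Ω → ℝ → ℝ := fun ω s => if a + l * s < W ω then Q' s else 0 with hf_def
    have hSmeas : MeasurableSet {p : Ω × ℝ | a + l * p.2 < W p.1} :=
      measurableSet_lt (measurable_const.add (measurable_snd.const_mul l))
        (hWmeas.comp measurable_fst)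
    have hQ2 : Integrable (fun p : Ω × ℝ => Q' p.2) (P.prod volume) := by
      have h1 : Integrable Q' (Measure.map Prod.snd (P.prod volume)) := by
        have : Measure.map Prod.snd (P.prod volume) = (volume : Measure ℝ) :=
          Measure.snd_prod
        rw [this]; exact hQ'integrable
      exact (integrable_map_measure hQ'meas.aestronglyMeasurable
        measurable_snd.aemeasurable).mp h1
    have hFint : Integrable (Function.uncurry f) (P.prod volume) := by
      have : Function.uncurry f =
          Set.indicator {p : Ω × ℝ | a + l * p.2 < W p.1} (fun p => Q' p.2) := by
        funext p
        rw [Set.indicator_apply]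
        rfl
      rw [this]
      exact hQ2.indicator hSmeas
    have hLHSptw : ∀ ω, Q ((W ω - a) / l) = ∫ s, f ω s := by
      intro ω
      rw [hQ, MeasureTheory.integral_Iic_eq_integral_Iio,
        ← MeasureTheory.integral_indicator measurableSet_Iio]
      congr 1
      funext s
      rw [Set.indicator_apply]
      have hiff : s ∈ Set.Iio ((W ω - a) / l) ↔ a + l * s < W ω := by
        rw [Set.mem_Iio, lt_div_iff₀ hl]
        constructor <;> intro <;> linarith
      simp only [hf_def]
      by_cases hs : a + l * s < W ω
      · rw [if_pos (hiff.mpr hs), if_pos hs]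
      · rw [if_neg (fun hmem => hs (hiff.mp hmem)), if_neg hs]
    have hInner : ∀ s, ∫ ω, f ω s ∂P = Q' s * Fbar x' (a + l * s) := by
      intro s
      have hA : MeasurableSet {ω | a + l * s < W ω} :=
        measurableSet_lt measurable_const hWmeas
      have h1 : (fun ω => f ω s) =
          Set.indicator {ω | a + l * s < W ω} (fun _ => Q' s) := by
        funext ω
        rw [Set.indicator_apply]
        rfl
      rw [h1, MeasureTheory.integral_indicator_const _ hA, measureReal_def, hWdist, smul_eq_mul, mul_comm]
    -- main chain of equalities
    have hG_meas : Measurable (fun s => Q' s * Fbar x' (a + l * s)) :=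
      hQ'meas.mul (hFb_meas.comp (measurable_const.add (measurable_id.const_mul l)))
    have hmain : ∫ ω, Q ((W ω - a) / l) ∂P
        = ∫ s, Q' s * Fbar x' (a + l * s) := by
      calc ∫ ω, Q ((W ω - a) / l) ∂P = ∫ ω, (∫ s, f ω s) ∂P := by
            exact integral_congr_ae (Filter.Eventually.of_forall hLHSptw)
        _ = ∫ s, ∫ ω, f ω s ∂P := MeasureTheory.integral_integral_swap hFint
        _ = ∫ s, Q' s * Fbar x' (a + l * s) :=
            integral_congr_ae (Filter.Eventually.of_forall hInner)
    have hsupp2 : ∀ s, s ∉ Set.Icc (-1:ℝ) 1 → Q' s * Fbar x' (a + l * s) = 0 :=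
      fun s hs => by rw [hQ'supp s hs, zero_mul]
    have hmain2 : (∫ s, Q' s * Fbar x' (a + l * s))
        = ∫ u in (-1:ℝ)..1, Q' u * Fbar x' (a + l * u) := by
      rw [intervalIntegral.integral_of_le (by norm_num : (-1:ℝ) ≤ 1),
        ← MeasureTheory.integral_Icc_eq_integral_Ioc,
        MeasureTheory.setIntegral_eq_integral_of_forall_compl_eq_zero hsupp2]
    -- interval integrability of the pieces
    have hii1 : IntervalIntegrable (fun u => Q' u * Fbar x' (a + l * u)) volume (-1) 1 := by
      apply IntervalIntegrable.mono_fun' (g := Q') (hQ'ii (-1) 1)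
        (hG_meas.aestronglyMeasurable)
      apply Filter.Eventually.of_forall
      intro u
      simp only [Real.norm_eq_abs, abs_mul, abs_of_nonneg (hQ'nonneg u)]
      calc Q' u * |Fbar x' (a + l * u)| ≤ Q' u * 1 := by
            apply mul_le_mul_of_nonneg_left _ (hQ'nonneg u)
            rw [abs_of_nonneg (hFb_nonneg _)]
            exact hFb_le_one _
        _ = Q' u := mul_one _
    have hii2 : IntervalIntegrable (fun u => Q' u * Fbar x' a) volume (-1) 1 :=
      (hQ'ii (-1) 1).mul_const _
    rw [hmain, hmain2]
    have hsplit : ∫ u in (-1:ℝ)..1, Q' u * (Fbar x' (a + l * u) - Fbar x' a)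
        = (∫ u in (-1:ℝ)..1, Q' u * Fbar x' (a + l * u))
          - ∫ u in (-1:ℝ)..1, Q' u * Fbar x' a := by
      rw [← intervalIntegral.integral_sub hii1 hii2]
      congr 1
      funext u
      ring
    rw [hsplit, intervalIntegral.integral_mul_const, hQ'int11]
    ring
  · -- Part 2
    -- bound on ε x on [u₀, ∞)
    have hev : ∀ᶠ s in atTop, ε x s ∈ Set.Ioo (-1:ℝ) 1 :=
      (hεlim x).eventually (Ioo_mem_nhds (by norm_num) (by norm_num))
    obtain ⟨S, hS⟩ := eventually_atTop.mp hev
    obtain ⟨M₀, hM₀⟩ :=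
      (isCompact_Icc (a := u₀) (b := S)).exists_bound_of_continuousOn
        (hεcont x).continuousOn
    set M : ℝ := max M₀ 1 with hM_def
    have hM1 : (1:ℝ) ≤ M := le_max_right _ _
    have hM : ∀ s, u₀ ≤ s → |ε x s| ≤ M := by
      intro s hs
      rcases le_total s S with h1 | h1
      · exact le_trans (hM₀ s ⟨hs, h1⟩) (le_max_left _ _)
      · have := hS s h1
        have : |ε x s| ≤ 1 := le_of_lt (abs_lt.mpr ⟨this.1, this.2⟩)
        linarith
    have hγx : 0 < 1 / γ x := one_div_pos.mpr (hγpos x)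
    set K : ℝ := 1 / γ x + κγ + M + κε with hK_def
    have hK : 0 < K := by positivity
    refine ⟨4 * K, by positivity, ?_⟩
    -- eventual conditions
    have hyn : ∀ᶠ n in atTop, 2 * u₀ + 2 ≤ y n := hy.eventually_ge_atTop _
    have hδ : 0 < min (1/2 : ℝ) (1 / (2 * K)) := by positivity
    have hln : ∀ᶠ n in atTop, |lam n / y n| < min (1/2 : ℝ) (1 / (2 * K)) := by
      have h0 := Metric.tendsto_nhds.mp hlam _ hδ
      refine h0.mono fun n hn => ?_
      rw [Real.dist_eq, sub_zero] at hn
      exact hn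
    have hhn : ∀ᶠ n in atTop, |h n| < 1 := by
      have h0 := Metric.tendsto_nhds.mp hh _ (one_pos)
      refine h0.mono fun n hn => ?_
      rw [Real.dist_eq, sub_zero] at hn
      exact hn
    filter_upwards [hyn, hln, hhn] with n hyn hln hhn
    intro x' hx'
    set a := y n with ha_def
    set l := lam n with hl_def
    have hl : 0 < l := hlampos n
    have ha4 : 2 * u₀ + 2 ≤ a := hyn
    have hapos : 0 < a := by linarith
    have hla2 : l / a < 1/2 := lt_of_le_of_lt (le_abs_self _) (lt_of_lt_of_le hln (min_le_left _ _))
    have hla2K : l / a < 1 / (2 * K) :=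
      lt_of_le_of_lt (le_abs_self _) (lt_of_lt_of_le hln (min_le_right _ _))
    have hl_le : l ≤ a / 2 := by
      have := (div_lt_iff₀ hapos).mp hla2
      linarith
    have hdist1 : dist x' x ≤ 1 := le_trans (mem_closedBall.mp hx') (le_of_lt (lt_of_abs_lt hhn))
    have hdist0 : 0 ≤ dist x' x := dist_nonneg
    have hau : u₀ + 1 ≤ a / 2 := by linarith
    -- integrand bound
    obtain ⟨g, hg_def⟩ : ∃ g : ℝ → ℝ, g = fun s => (1 / γ x' - ε x' s) / s := ⟨_, rfl⟩
    have hnum : ∀ s, a / 2 ≤ s → |1 / γ x' - ε x' s| ≤ K := by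
      intro s hs
      have hsu : u₀ < s := by linarith
      have h1 : |1 / γ x'| ≤ 1 / γ x + κγ := by
        have := hLγ x x'
        have habs : |1 / γ x'| - |1 / γ x| ≤ |1 / γ x - 1 / γ x'| := by
          rw [abs_sub_comm]
          exact abs_sub_abs_le_abs_sub _ _
        have h2 : κγ * dist x x' ≤ κγ := by
          rw [dist_comm]
          nlinarith
        have h3 : |1 / γ x| = 1 / γ x := abs_of_pos hγx
        linarith
      have h2 : |ε x' s| ≤ M + κε := by
        have := hLε x x' s hsu
        have habs : |ε x' s| - |ε x s| ≤ |ε x s - ε x' s| := by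
          rw [abs_sub_comm]
          exact abs_sub_abs_le_abs_sub _ _
        have h2 : κε * dist x x' ≤ κε := by
          rw [dist_comm]
          nlinarith
        have := hM s (le_of_lt hsu)
        linarith
      calc |1 / γ x' - ε x' s| ≤ |1 / γ x'| + |ε x' s| := abs_sub _ _
        _ ≤ K := by rw [hK_def]; linarith
    have hgbd : ∀ s, a / 2 ≤ s → |g s| ≤ 2 * K / a := by
      intro s hs
      have hspos : 0 < s := by linarith
      rw [hg_def]
      simp only
      rw [abs_div, abs_of_pos hspos]
      calc |1 / γ x' - ε x' s| / s ≤ K / (a / 2) :=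
            div_le_div₀ hK.le (hnum s hs) (by linarith) hs
        _ = 2 * K / a := by rw [div_div_eq_mul_div]; ring
    -- continuity and integrability of g on positive reals
    have hgcont : ContinuousOn g (Set.Ioi (0:ℝ)) := by
      rw [hg_def]
      apply ContinuousOn.div
      · exact (continuous_const.sub (hεcont x')).continuousOn
      · exact continuousOn_id
      · exact fun s hs => ne_of_gt hs
    have hgii : ∀ p q : ℝ, 0 < p → 0 < q → IntervalIntegrable g volume p q := by
      intro p q hp hq
      apply ContinuousOn.intervalIntegrable
      apply hgcont.mono
      intro s hs
      exact lt_of_lt_of_le (lt_min hp hq) hs.1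
    have ha1 : (1:ℝ) ≤ a := by linarith
    have hFbapos : 0 < Fbar x' a := by
      rw [hF x' a ha1]
      exact mul_pos (hcpos x') (Real.exp_pos _)
    -- the ratio formula
    have hratio : ∀ u ∈ Set.Icc (-1:ℝ) 1,
        Fbar x' (a + l * u) / Fbar x' a - 1
          = Real.exp (-(∫ s in a..(a + l * u), g s)) - 1 := by
      intro u hu
      have hul : -l ≤ l * u := by have h0 := mul_le_mul_of_nonneg_left hu.1 hl.le; linarith
      have hur : l * u ≤ l := by have h0 := mul_le_mul_of_nonneg_left hu.2 hl.le; linarith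
      have ht1 : (1:ℝ) ≤ a + l * u := by linarith
      have htpos : 0 < a + l * u := by linarith
      rw [hF x' (a + l * u) ht1, hF x' a ha1]
      rw [mul_div_mul_left _ _ (ne_of_gt (hcpos x'))]
      rw [← Real.exp_sub]
      congr 1
      have hadd : (∫ s in (1:ℝ)..a, g s) + ∫ s in a..(a + l * u), g s
          = ∫ s in (1:ℝ)..(a + l * u), g s :=
        intervalIntegral.integral_add_adjacent_intervals
          (hgii 1 a one_pos hapos) (hgii a (a + l * u) hapos htpos)
      rw [← hg_def, Real.exp_eq_exp]
      have hadd' : intervalIntegral g 1 a volume + intervalIntegral g a (a + l * u) volume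
          = intervalIntegral g 1 (a + l * u) volume := hadd
      have heq : (∫ s in a..(a + l * u), g s) = intervalIntegral g a (a + l * u) volume := rfl
      linarith [hadd', heq]
    -- bound on the inner integral
    have hIbd : ∀ u ∈ Set.Icc (-1:ℝ) 1,
        |∫ s in a..(a + l * u), g s| ≤ 2 * K * (l / a) := by
      intro u hu
      have hul : -l ≤ l * u := by have h0 := mul_le_mul_of_nonneg_left hu.1 hl.le; linarith
      have hur : l * u ≤ l := by have h0 := mul_le_mul_of_nonneg_left hu.2 hl.le; linarith
      have hbd : ∀ s ∈ Set.uIoc a (a + l * u), ‖g s‖ ≤ 2 * K / a := by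
        intro s hs
        have hs1 : min a (a + l * u) ≤ s := le_of_lt hs.1
        have hs2 : a / 2 ≤ s := by
          rcases le_total a (a + l * u) with hc | hc
          · rw [min_eq_left hc] at hs1; linarith
          · rw [min_eq_right hc] at hs1; linarith
        exact hgbd s hs2
      calc |∫ s in a..(a + l * u), g s| ≤ 2 * K / a * |a + l * u - a| :=
            intervalIntegral.norm_integral_le_of_norm_le_const hbd
        _ ≤ 2 * K / a * l := by
            apply mul_le_mul_of_nonneg_left _ (by positivity)
            rw [abs_le]
            constructor <;> linarith
        _ = 2 * K * (l / a) := by ring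
    have h2Kla : 2 * K * (l / a) ≤ 1 := by
      have hlapos : 0 < l / a := div_pos hl hapos
      have := (lt_div_iff₀ (by positivity : (0:ℝ) < 2 * K)).mp hla2K
      linarith
    -- pointwise bound on ratio - 1
    have hratiobd : ∀ u ∈ Set.Icc (-1:ℝ) 1,
        |Fbar x' (a + l * u) / Fbar x' a - 1| ≤ 4 * K * (l / a) := by
      intro u hu
      rw [hratio u hu]
      have h1 : |-(∫ s in a..(a + l * u), g s)| ≤ 2 * K * (l / a) := by
        rw [abs_neg]; exact hIbd u hu
      calc |Real.exp (-(∫ s in a..(a + l * u), g s)) - 1|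
          ≤ 2 * |-(∫ s in a..(a + l * u), g s)| :=
            Real.abs_exp_sub_one_le (le_trans h1 h2Kla)
        _ ≤ 2 * (2 * K * (l / a)) := by linarith
        _ = 4 * K * (l / a) := by ring
    -- measurability of the ratio in u
    have hal05 : 0 < a - l := by linarith
    have hcontA : ContinuousOn (fun t => ∫ s in (1:ℝ)..t, g s) (Set.uIcc (1:ℝ) (a + l)) :=
      intervalIntegral.continuousOn_primitive_interval'
        (hgii 1 (a + l) one_pos (by linarith)) Set.left_mem_uIcc
    have hmaps : ∀ u ∈ Set.Icc (-1:ℝ) 1, a + l * u ∈ Set.uIcc (1:ℝ) (a + l) := by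
      intro u hu
      have hul : -l ≤ l * u := by have h0 := mul_le_mul_of_nonneg_left hu.1 hl.le; linarith
      have hur : l * u ≤ l := by have h0 := mul_le_mul_of_nonneg_left hu.2 hl.le; linarith
      rw [Set.uIcc_of_le (by linarith : (1:ℝ) ≤ a + l)]
      exact ⟨by linarith, by linarith⟩
    have hcontratio : ContinuousOn
        (fun u => Fbar x' (a + l * u) / Fbar x' a - 1) (Set.Icc (-1:ℝ) 1) := by
      have hcont2 : ContinuousOn
          (fun u => c x' * Real.exp (-(∫ s in (1:ℝ)..(a + l * u), g s)) / Fbar x' a - 1)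
          (Set.Icc (-1:ℝ) 1) := by
        apply ContinuousOn.sub _ continuousOn_const
        apply ContinuousOn.div _ continuousOn_const (fun u _ => ne_of_gt hFbapos)
        apply ContinuousOn.mul continuousOn_const
        apply Real.continuous_exp.comp_continuousOn
        apply ContinuousOn.neg
        exact hcontA.comp ((continuous_const.add (continuous_const.mul continuous_id)).continuousOn)
          (fun u hu => hmaps u hu)
      apply ContinuousOn.congr hcont2
      intro u hu
      have hul : -l ≤ l * u := by have h0 := mul_le_mul_of_nonneg_left hu.1 hl.le; linarith
      have ht1 : (1:ℝ) ≤ a + l * u := by linarith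
      show Fbar x' (a + l * u) / Fbar x' a - 1
          = c x' * Real.exp (-(∫ s in (1:ℝ)..(a + l * u), g s)) / Fbar x' a - 1
      rw [hF x' (a + l * u) ht1, hg_def]
    -- integrability of the integrand
    have hφii : IntervalIntegrable
        (fun u => Q' u * (Fbar x' (a + l * u) / Fbar x' a - 1)) volume (-1) 1 := by
      apply IntervalIntegrable.mono_fun' (g := fun u => Q' u * (4 * K * (l / a)))
        ((hQ'ii (-1) 1).mul_const _)
      · apply AEStronglyMeasurable.mul hQ'meas.aestronglyMeasurable
        have h1 : AEStronglyMeasurable (fun u => Fbar x' (a + l * u) / Fbar x' a - 1)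
            (volume.restrict (Set.Icc (-1:ℝ) 1)) :=
          hcontratio.aestronglyMeasurable measurableSet_Icc
        have h2 : Set.uIoc (-1:ℝ) 1 ⊆ Set.Icc (-1:ℝ) 1 := by
          rw [Set.uIoc_of_le (by norm_num : (-1:ℝ) ≤ 1)]
          exact Set.Ioc_subset_Icc_self
        exact h1.mono_measure (Measure.restrict_mono h2 le_rfl)
      · rw [Filter.EventuallyLE, ae_restrict_iff' measurableSet_uIoc]
        apply Filter.Eventually.of_forall
        intro u hu
        have humem : u ∈ Set.Icc (-1:ℝ) 1 := by
          rw [Set.uIoc_of_le (by norm_num : (-1:ℝ) ≤ 1)] at hu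
          exact Set.Ioc_subset_Icc_self hu
        simp only [Real.norm_eq_abs, abs_mul, abs_of_nonneg (hQ'nonneg u)]
        exact mul_le_mul_of_nonneg_left (hratiobd u humem) (hQ'nonneg u)
    -- final bound
    calc |∫ u in (-1:ℝ)..1, Q' u * (Fbar x' (a + l * u) / Fbar x' a - 1)|
        ≤ ∫ u in (-1:ℝ)..1, |Q' u * (Fbar x' (a + l * u) / Fbar x' a - 1)| :=
          intervalIntegral.abs_integral_le_integral_abs (by norm_num)
      _ ≤ ∫ u in (-1:ℝ)..1, Q' u * (4 * K * (l / a)) := by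
          apply intervalIntegral.integral_mono_on (by norm_num) hφii.abs
            ((hQ'ii (-1) 1).mul_const _)
          intro u hu
          rw [abs_mul, abs_of_nonneg (hQ'nonneg u)]
          exact mul_le_mul_of_nonneg_left (hratiobd u hu) (hQ'nonneg u)
      _ = 4 * K * (l / a) := by
          rw [intervalIntegral.integral_mul_const, hQ'int11, one_mul]
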